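/- Let T be a finite set, for each v ∈ T let X_v be a set, and let X ⊆ ∏_{v∈T} X_v. Let ≺ be a tree order on T and let M be the set of maximal elements of (T, ≺). Suppose that for every v ∈ T \ M and for every immediate successor w of v, x_{{w} ∪ T_{≻w}} d-determines x_{{v}}, where T_{≻w} = {u ∈ T : w ≺ u}. Then x_M d^{|T \ M|}-determines x_{T \ M}. -/

import Mathlib

/-- `x_A` `d`-determines `x_B`. -/
def Determines {V : Type*} {F : V → Type*} (S : Set (∀ v, F v))
    (A B : Set V) (d : ℕ) : Prop :=
  ∀ c : ∀ a : A, F a,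
    ((fun x : ∀ v, F v => fun b : B => x b) ''
      {x ∈ S | ∀ a : A, x a = c a}).encard ≤ (d : ℕ∞)

open Set

lemma fiber_count {α β : Type*} {s : Set α} {f : α → β} {m k : ℕ}
    (him : (f '' s).encard ≤ m)
    (hfib : ∀ b, {a ∈ s | f a = b}.encard ≤ k) :
    s.encard ≤ ((m * k : ℕ) : ℕ∞) := by
  classical
  have himfin : (f '' s).Finite := Set.finite_of_encard_le_coe him
  have hfibfin : ∀ b : β, {a ∈ s | f a = b}.Finite :=
    fun b => Set.finite_of_encard_le_coe (hfib b)
  have hsub : s ⊆ ⋃ b ∈ f '' s, {a ∈ s | f a = b} := by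
    intro a ha
    simp only [Set.mem_iUnion, Set.mem_setOf_eq, Set.mem_image]
    exact ⟨f a, ⟨a, ha, rfl⟩, ha, rfl⟩
  have hsfin : s.Finite := ((himfin.biUnion (fun b _ => hfibfin b)).subset hsub)
  have hfs : hsfin.toFinset ⊆ himfin.toFinset.biUnion (fun b => (hfibfin b).toFinset) := by
    intro a ha
    simp only [Set.Finite.mem_toFinset] at ha
    simp only [Finset.mem_biUnion, Set.Finite.mem_toFinset, Set.mem_image, Set.mem_setOf_eq]
    exact ⟨f a, ⟨a, ha, rfl⟩, ha, rfl⟩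
  have hcard : hsfin.toFinset.card ≤ m * k := by
    refine (Finset.card_le_card hfs).trans ?_
    refine (Finset.card_biUnion_le_card_mul _ _ k ?_).trans ?_
    · intro b _
      have := hfib b
      rw [(hfibfin b).encard_eq_coe_toFinset_card] at this
      exact_mod_cast this
    · have : himfin.toFinset.card ≤ m := by
        have := him
        rw [himfin.encard_eq_coe_toFinset_card] at this
        exact_mod_cast this
      exact Nat.mul_le_mul_right k this
  rw [hsfin.encard_eq_coe_toFinset_card]
  exact_mod_cast hcard

lemma det_mono_left {V : Type*} {F : V → Type*} (S : Set (∀ v, F v))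
    {A A' B : Set V} (h : A ⊆ A') {d : ℕ}
    (hd : Determines S A B d) : Determines S A' B d := by
  intro c
  refine le_trans (Set.encard_le_encard (Set.image_mono ?_)) (hd fun a => c ⟨a, h a.2⟩)
  rintro x ⟨hxS, hx⟩
  exact ⟨hxS, fun a => hx ⟨a, h a.2⟩⟩

lemma det_comp {V : Type*} {F : V → Type*} (S : Set (∀ v, F v))
    {A B C : Set V} {d1 d2 : ℕ}
    (h1 : Determines S A B d1) (h2 : Determines S (A ∪ B) C d2) :
    Determines S A (B ∪ C) (d1 * d2) := by
  classical
  intro c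
  set Fib := {x ∈ S | ∀ a : A, x a = c a} with hFib
  set P := ((fun x : ∀ v, F v => fun b : ↥(B ∪ C) => x b) '' Fib) with hP
  set rB : (∀ u : ↥(B ∪ C), F u) → (∀ b : B, F b) :=
    fun y b => y ⟨b.1, Or.inl b.2⟩ with hrB
  set rC : (∀ u : ↥(B ∪ C), F u) → (∀ b : C, F b) :=
    fun y b => y ⟨b.1, Or.inr b.2⟩ with hrC
  refine fiber_count (f := rB) ?_ ?_
  · -- image under rB is contained in the B-projection of Fib
    refine le_trans (Set.encard_le_encard ?_) (h1 c)
    rintro _ ⟨y, ⟨x, hx, rfl⟩, rfl⟩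
    exact ⟨x, hx, rfl⟩
  · intro b
    -- elements of P with rB-value b inject via rC into the C-projection of the
    -- (A ∪ B)-fiber
    set c' : ∀ a : ↥(A ∪ B), F a :=
      fun a => if h : a.1 ∈ A then c ⟨a.1, h⟩ else b ⟨a.1, a.2.resolve_left h⟩ with hc'
    have hinj : Set.InjOn rC {y ∈ P | rB y = b} := by
      rintro y ⟨_, hy⟩ y' ⟨_, hy'⟩ hyy'
      funext u
      rcases u.2 with hu | hu
      · have := congrFun (hy.trans hy'.symm) ⟨u.1, hu⟩
        simpa [hrB, Subtype.ext_iff] using this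
      · have := congrFun hyy' ⟨u.1, hu⟩
        simpa [hrC, Subtype.ext_iff] using this
    rw [← hinj.encard_image]
    refine le_trans (Set.encard_le_encard ?_) (h2 c')
    rintro _ ⟨y, ⟨⟨x, ⟨hxS, hxA⟩, rfl⟩, hyb⟩, rfl⟩
    refine ⟨x, ⟨hxS, ?_⟩, rfl⟩
    intro a
    by_cases h : a.1 ∈ A
    · simpa [hc', h] using hxA ⟨a.1, h⟩
    · have hb : a.1 ∈ B := a.2.resolve_left h
      have := congrFun hyb ⟨a.1, hb⟩
      simp only [hrB] at this
      simpa [hc', h] using this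

/-- Tree Lemma: let `≺` (given by `<` of a partial order) be a tree order on the
finite set `T` (every down-set `{w | w < v}` is linearly ordered and there is
exactly one minimal element), and let `M` be the set of maximal elements.  If for
every `v ∉ M` and every immediate successor `w` of `v` we have that
`x_{{w} ∪ T_{≻ w}}` `d`-determines `x_{v}`, then `x_M` `d^{|T \ M|}`-determines
`x_{T \ M}`. -/
theorem tree_lemma {T : Type*} [Fintype T] [PartialOrder T]
    {F : T → Type*} (S : Set (∀ v, F v)) (d : ℕ)
    (hchain : ∀ v a b : T, a < v → b < v → a ≤ b ∨ b ≤ a)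
    (hmin : ∃! m : T, ∀ t : T, ¬ t < m)
    (M : Set T) (hM : M = {v : T | ∀ w : T, ¬ v < w})
    (hdet : ∀ v ∉ M, ∀ w : T, v < w → (¬ ∃ u : T, v < u ∧ u < w) →
      Determines S ({w} ∪ {u : T | w < u}) {v} d) :
    Determines S M Mᶜ (d ^ Mᶜ.ncard) := by
  classical
  have key : ∀ n : ℕ, ∀ B : Set T, B ⊆ Mᶜ →
      (∀ v ∈ B, ∀ u : T, v < u → u ∉ M → u ∈ B) → B.ncard = n →
      Determines S M B (d ^ n) := by
    intro n
    induction n with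
    | zero =>
      intro B hBsub hup hcard
      have hBfin : B.Finite := B.toFinite
      have hBempty : B = ∅ := (Set.ncard_eq_zero hBfin).mp hcard
      subst hBempty
      intro c
      refine le_trans (Set.encard_le_one_iff.mpr ?_) (by simp)
      rintro y y' ⟨x, _, rfl⟩ ⟨x', _, rfl⟩
      funext b
      exact absurd b.2 (Set.notMem_empty b.1)
    | succ n ih =>
      intro B hBsub hup hcard
      have hBfin : B.Finite := B.toFinite
      have hBne : B.Nonempty := by
        rw [← Set.ncard_pos hBfin, hcard]; omega
      obtain ⟨v, hvB, hvmin⟩ := hBfin.toFinset.exists_minimal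
        (hBfin.toFinset_nonempty.mpr hBne)
      rw [Set.Finite.mem_toFinset] at hvB
      have hvmin' : ∀ b ∈ B, ¬ b < v := by
        intro b hb
        exact fun hlt => lt_irrefl b (lt_of_lt_of_le hlt (hvmin (by simpa using hb) hlt.le))
      have hvM : v ∉ M := hBsub hvB
      -- B minus v
      have hup' : ∀ v' ∈ B \ {v}, ∀ u : T, v' < u → u ∉ M → u ∈ B \ {v} := by
        rintro v' ⟨hv'B, hv'v⟩ u hlt huM
        refine ⟨hup v' hv'B u hlt huM, ?_⟩
        intro hu
        rw [Set.mem_singleton_iff] at hu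
        subst hu
        exact hvmin' v' hv'B hlt
      have hcard' : (B \ {v}).ncard = n := by
        have := Set.ncard_diff_singleton_add_one hvB hBfin
        omega
      have ih' := ih (B \ {v}) (fun u hu => hBsub hu.1) hup' hcard'
      -- immediate successor of v
      have hvlt : ∃ w : T, v < w := by
        by_contra h
        push_neg at h
        exact hvM (hM ▸ (by simpa using h))
      have hWfin : {u : T | v < u}.Finite := Set.toFinite _
      obtain ⟨w, hwmem, hwmin⟩ := hWfin.toFinset.exists_minimal
        (hWfin.toFinset_nonempty.mpr hvlt)
      rw [Set.Finite.mem_toFinset, Set.mem_setOf_eq] at hwmem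
      have hwimm : ¬ ∃ u : T, v < u ∧ u < w := by
        rintro ⟨u, hu1, hu2⟩
        exact lt_irrefl u (lt_of_lt_of_le hu2 (hwmin (by simpa using hu1) hu2.le))
      have hdet' := hdet v hvM w hwmem hwimm
      have hsub2 : ({w} ∪ {u : T | w < u} : Set T) ⊆ M ∪ (B \ {v}) := by
        intro t ht
        have hvt : v < t := by
          rcases ht with ht | ht
          · rw [Set.mem_singleton_iff] at ht; exact ht ▸ hwmem
          · exact hwmem.trans ht
        by_cases htM : t ∈ M
        · exact Or.inl htM
        · exact Or.inr ⟨hup v hvB t hvt htM, fun h => absurd (Set.mem_singleton_iff.mp h ▸ hvt) (lt_irrefl t)⟩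
      have h2 : Determines S (M ∪ (B \ {v})) {v} d := det_mono_left S hsub2 hdet'
      have hcomp := det_comp S ih' h2
      have hBeq : (B \ {v}) ∪ {v} = B := Set.diff_union_of_subset (by simpa using hvB)
      rw [hBeq] at hcomp
      rw [pow_succ]
      exact hcomp
  exact key Mᶜ.ncard Mᶜ subset_rfl (fun v _ u _ hu => hu) rfl
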